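/- arXiv:2301.01004 — 2 statements merged into one kernel-verified Lean document; each statement's English description precedes it below -/
import Mathlib

section
/- Let Δ be a root system with Weyl group W, positive system Δ⁺, and ρ the half sum of positive roots. If λ is dominant with respect to Δ⁺ and also dominant with respect to the positive system wΔ⁺ for some w ∈ W, then ‖λ − ρ‖ = ‖λ − wρ‖. -/
open scoped RealInnerProductSpace

variable {V : Type*} [NormedAddCommGroup V] [InnerProductSpace ℝ V] [FiniteDimensional ℝ V]

/-- Reflection in the hyperplane orthogonal to `α`. -/
noncomputable def rootReflection (α : V) : V ≃ₗᵢ[ℝ] V :=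
  Submodule.reflection (Submodule.span ℝ {α})ᗮ

/-- `Δ` is a (reduced, crystallographic) root system in `V`. -/
structure IsRootSystem (Δ : Finset V) : Prop where
  nonzero : (0 : V) ∉ Δ
  neg_mem : ∀ α ∈ Δ, -α ∈ Δ
  reflect_mem : ∀ α ∈ Δ, ∀ β ∈ Δ, rootReflection α β ∈ Δ
  crystallographic : ∀ α ∈ Δ, ∀ β ∈ Δ, ∃ n : ℤ, 2 * ⟪β, α⟫ / ⟪α, α⟫ = (n : ℝ)
  reduced : ∀ α ∈ Δ, ∀ t : ℝ, t • α ∈ Δ → t = 1 ∨ t = -1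

/-- The Weyl group: the subgroup of linear isometries generated by root reflections. -/
def weylGroup (Δ : Finset V) : Subgroup (V ≃ₗᵢ[ℝ] V) :=
  Subgroup.closure { g | ∃ α ∈ Δ, g = rootReflection α }

/-- `P` is a positive system for the root system `Δ`. -/
structure IsPositiveSystem (Δ P : Finset V) : Prop where
  subset : P ⊆ Δ
  mem_or_neg_mem : ∀ α ∈ Δ, α ∈ P ∨ -α ∈ P
  not_neg_mem : ∀ α ∈ P, -α ∉ P

/-- Half sum of the elements of `P`. -/
noncomputable def halfSum (P : Finset V) : V := (2:ℝ)⁻¹ • ∑ α ∈ P, α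

/-- `λ` is dominant with respect to the set of positive roots `P`. -/
def IsDominant (l : V) (P : Finset V) : Prop := ∀ α ∈ P, 0 ≤ ⟪l, α⟫

lemma weyl_maps_aux [DecidableEq V] (Δ : Finset V) (hΔ : IsRootSystem Δ)
    {w : V ≃ₗᵢ[ℝ] V} (hw : w ∈ weylGroup Δ) : ∀ β ∈ Δ, w β ∈ Δ := by
  have key : ∀ (g : V ≃ₗᵢ[ℝ] V), (∀ β ∈ Δ, g β ∈ Δ) → ∀ β ∈ Δ, g⁻¹ β ∈ Δ := by
    intro g hg β hβ
    have himg : Δ.image g = Δ := by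
      apply Finset.eq_of_subset_of_card_le
      · intro x hx
        obtain ⟨y, hy, rfl⟩ := Finset.mem_image.mp hx
        exact hg y hy
      · rw [Finset.card_image_of_injective _ g.injective]
    rw [← himg] at hβ
    obtain ⟨γ, hγ, rfl⟩ := Finset.mem_image.mp hβ
    simpa using hγ
  induction hw using Subgroup.closure_induction with
  | mem g hg =>
    obtain ⟨α, hα, rfl⟩ := hg
    exact fun β hβ => hΔ.reflect_mem α hα β hβ
  | one => simpa using fun β hβ => hβ
  | mul g₁ g₂ _ _ h1 h2 => exact fun β hβ => h1 (g₂ β) (h2 β hβ)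
  | inv g _ h => exact key g h

theorem stmt1 [DecidableEq V] (Δ P : Finset V) (hΔ : IsRootSystem Δ) (hP : IsPositiveSystem Δ P)
    (l : V) (hl : IsDominant l P) (w : V ≃ₗᵢ[ℝ] V) (hw : w ∈ weylGroup Δ)
    (hl2 : IsDominant l (P.image w)) :
    ‖l - halfSum P‖ = ‖l - w (halfSum P)‖ := by
  set Q := P.image w with hQ
  have hQΔ : ∀ α ∈ Q, α ∈ Δ := by
    intro α hα
    obtain ⟨β, hβ, rfl⟩ := Finset.mem_image.mp hα
    exact weyl_maps_aux Δ hΔ hw β (hP.subset hβ)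
  -- α ∈ P \ Q has -α ∈ Q
  have h1 : ∀ α ∈ P, α ∉ Q → -α ∈ Q := by
    intro α hα hαQ
    have hαΔ : w⁻¹ α ∈ Δ := weyl_maps_aux Δ hΔ (inv_mem hw) α (hP.subset hα)
    rcases hP.mem_or_neg_mem _ hαΔ with h | h
    · exact absurd (Finset.mem_image.mpr ⟨w⁻¹ α, h, by simp⟩) hαQ
    · exact Finset.mem_image.mpr ⟨-(w⁻¹ α), h, by simp⟩
  have h2 : ∀ α ∈ Q, α ∉ P → -α ∈ P := by
    intro α hα hαP
    rcases hP.mem_or_neg_mem α (hQΔ α hα) with h | h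
    · exact absurd h hαP
    · exact h
  -- zero inner products on the symmetric difference
  have z1 : ∀ α ∈ P \ Q, ⟪l, α⟫ = 0 := by
    intro α hα
    obtain ⟨h1', h2'⟩ := Finset.mem_sdiff.mp hα
    have a := hl α h1'
    have b := hl2 _ (h1 α h1' h2')
    rw [inner_neg_right] at b
    linarith
  have z2 : ∀ α ∈ Q \ P, ⟪l, α⟫ = 0 := by
    intro α hα
    obtain ⟨h1', h2'⟩ := Finset.mem_sdiff.mp hα
    have a := hl2 α h1'
    have b := hl _ (h2 α h1' h2')
    rw [inner_neg_right] at b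
    linarith
  -- ⟪l, halfSum P⟫ = ⟪l, halfSum Q⟫
  have sumeq : ∑ α ∈ P, ⟪l, α⟫ = ∑ α ∈ Q, ⟪l, α⟫ := by
    rw [← Finset.sum_inter_add_sum_sdiff P Q (fun α => ⟪l, α⟫),
        ← Finset.sum_inter_add_sum_sdiff Q P (fun α => ⟪l, α⟫),
        Finset.sum_eq_zero z1, Finset.sum_eq_zero z2, Finset.inter_comm]
  -- ⟪l, ρ⟫ = ⟪l, wρ⟫
  have hwρ : w (halfSum P) = halfSum Q := by
    simp only [halfSum, map_smul, map_sum, hQ]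
    rw [Finset.sum_image (fun a _ b _ h => w.injective h)]
  have hinner : ⟪l, halfSum P⟫ = ⟪l, w (halfSum P)⟫ := by
    rw [hwρ]
    simp only [halfSum, inner_smul_right, inner_sum, sumeq]
  have hnorm : ‖w (halfSum P)‖ = ‖halfSum P‖ := w.norm_map _
  have hsq : ‖l - halfSum P‖ ^ 2 = ‖l - w (halfSum P)‖ ^ 2 := by
    rw [← real_inner_self_eq_norm_sq, ← real_inner_self_eq_norm_sq]
    simp only [inner_sub_sub_self]
    rw [w.inner_map_map]
    have c1 : ⟪halfSum P, l⟫ = ⟪l, halfSum P⟫ := real_inner_comm _ _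
    have c2 : ⟪w (halfSum P), l⟫ = ⟪l, w (halfSum P)⟫ := real_inner_comm _ _
    linarith [hinner, c1, c2]
  have := congrArg Real.sqrt hsq
  simpa [Real.sqrt_sq, norm_nonneg] using this
end

section
/- Let Δ be a root system with positive system Δ⁺, Weyl group W, and ρ the half sum of positive roots. Suppose λ is dominant with respect to Δ⁺ and w ∈ W satisfies ‖λ − ρ‖ = ‖λ − wρ‖. Then (λ, γ) = 0 for every γ ∈ D_w = {γ ∈ −Δ⁺ : γ ∈ wΔ⁺}; in particular λ is dominant with respect to wΔ⁺. -/
open scoped RealInnerProductSpace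

variable {V : Type*} [NormedAddCommGroup V] [InnerProductSpace ℝ V] [FiniteDimensional ℝ V]

lemma rootReflection_inv (α : V) : (rootReflection α)⁻¹ = rootReflection α := by
  ext x
  show (rootReflection α).symm x = _
  rw [rootReflection, Submodule.reflection_symm]

lemma weyl_preserves {Δ : Finset V} (hΔ : IsRootSystem Δ) {w : V ≃ₗᵢ[ℝ] V}
    (hw : w ∈ weylGroup Δ) : ∀ β ∈ Δ, w β ∈ Δ := by
  have : ∀ β ∈ Δ, w β ∈ Δ ∧ w⁻¹ β ∈ Δ := by
    induction hw using Subgroup.closure_induction with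
    | mem x hx =>
      obtain ⟨α, hα, rfl⟩ := hx
      rw [rootReflection_inv]
      exact fun β hβ => ⟨hΔ.reflect_mem α hα β hβ, hΔ.reflect_mem α hα β hβ⟩
    | one => simpa using fun β hβ => ⟨hβ, hβ⟩
    | mul x y hx hy ihx ihy =>
      intro β hβ
      refine ⟨?_, ?_⟩
      · exact (ihx _ ((ihy β hβ).1)).1
      · simpa using (ihy _ ((ihx β hβ).2)).2
    | inv x hx ih =>
      intro β hβ
      simpa using ⟨(ih β hβ).2, (ih β hβ).1⟩
  exact fun β hβ => (this β hβ).1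

theorem stmt7 [DecidableEq V] (Δ P : Finset V) (hΔ : IsRootSystem Δ) (hP : IsPositiveSystem Δ P)
    (l : V) (hl : IsDominant l P) (w : V ≃ₗᵢ[ℝ] V) (hw : w ∈ weylGroup Δ)
    (heq : ‖l - halfSum P‖ = ‖l - w (halfSum P)‖) :
    (∀ γ ∈ (P.image (fun a => -a)) ∩ (P.image w), ⟪l, γ⟫ = 0) ∧
      IsDominant l (P.image w) := by
  set Q : Finset V := P.image w with hQdef
  have hwΔ := weyl_preserves hΔ hw
  have hwinvΔ := weyl_preserves hΔ (inv_mem hw)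
  -- Q ⊆ Δ
  have hQΔ : Q ⊆ Δ := by
    intro β hβ
    obtain ⟨α, hα, rfl⟩ := Finset.mem_image.mp hβ
    exact hwΔ α (hP.subset hα)
  -- Q has no α with -α ∈ Q
  have hQneg : ∀ α ∈ Q, -α ∉ Q := by
    intro α hα hnα
    obtain ⟨a, ha, rfl⟩ := Finset.mem_image.mp hα
    obtain ⟨b, hb, hwb⟩ := Finset.mem_image.mp hnα
    have : b = -a := by
      apply w.injective
      rw [hwb, map_neg]
    exact hP.not_neg_mem a ha (this ▸ hb)
  -- if α ∈ Δ and α ∉ Q then -α ∈ Q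
  have hQmem_or : ∀ α ∈ Δ, α ∈ Q ∨ -α ∈ Q := by
    intro α hα
    rcases hP.mem_or_neg_mem (w⁻¹ α) (hwinvΔ α hα) with h | h
    · left; exact Finset.mem_image.mpr ⟨w⁻¹ α, h, by simp⟩
    · right
      refine Finset.mem_image.mpr ⟨-w⁻¹ α, h, by simp⟩
  -- w (halfSum P) = halfSum Q
  have hhalf : w (halfSum P) = halfSum Q := by
    rw [halfSum, halfSum, map_smul, map_sum, hQdef,
      Finset.sum_image (fun a _ b _ h => w.injective h)]
  -- from heq: ⟪l, halfSum P⟫ = ⟪l, halfSum Q⟫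
  have hnorm : ‖halfSum Q‖ = ‖halfSum P‖ := by rw [← hhalf, w.norm_map]
  have hip : ⟪l, halfSum P⟫ = ⟪l, halfSum Q⟫ := by
    have h1 : ‖l - halfSum P‖ ^ 2 = ‖l - halfSum Q‖ ^ 2 := by rw [heq, hhalf]
    rw [norm_sub_sq_real, norm_sub_sq_real, hnorm] at h1
    linarith [h1]
  -- sum identity
  have hnegsum : ∑ β ∈ Q \ P, β = -∑ β ∈ P \ Q, β := by
    rw [← Finset.sum_neg_distrib]
    refine Finset.sum_nbij' (fun β => -β) (fun β => -β) ?_ ?_ ?_ ?_ ?_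
    · intro a ha
      rcases Finset.mem_sdiff.mp ha with ⟨haQ, haP⟩
      refine Finset.mem_sdiff.mpr ⟨?_, ?_⟩
      · rcases hP.mem_or_neg_mem a (hQΔ haQ) with h | h
        · exact absurd h haP
        · exact h
      · simpa using hQneg a haQ
    · intro a ha
      rcases Finset.mem_sdiff.mp ha with ⟨haP, haQ⟩
      refine Finset.mem_sdiff.mpr ⟨?_, ?_⟩
      · rcases hQmem_or a (hP.subset haP) with h | h
        · exact absurd h haQ
        · exact h
      · intro h
        exact hP.not_neg_mem a haP h
    · intro a _; simp
    · intro a _; simp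
    · intro a _; simp
  have hsum0 : ∑ β ∈ P \ Q, ⟪l, β⟫ = 0 := by
    have h2 : ⟪l, ∑ β ∈ P, β⟫ = ⟪l, ∑ β ∈ Q, β⟫ := by
      have := hip
      rw [halfSum, halfSum, real_inner_smul_right, real_inner_smul_right] at this
      have h2ne : (2:ℝ)⁻¹ ≠ 0 := by norm_num
      exact mul_left_cancel₀ h2ne this
    have hPsplit : ∑ β ∈ P, β = ∑ β ∈ P ∩ Q, β + ∑ β ∈ P \ Q, β :=
      (Finset.sum_inter_add_sum_sdiff P Q _).symm
    have hQsplit : ∑ β ∈ Q, β = ∑ β ∈ P ∩ Q, β + ∑ β ∈ Q \ P, β := by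
      rw [Finset.inter_comm]
      exact (Finset.sum_inter_add_sum_sdiff Q P _).symm
    rw [hPsplit, hQsplit, hnegsum, inner_add_right, inner_add_right,
      inner_neg_right] at h2
    have : ⟪l, ∑ β ∈ P \ Q, β⟫ = 0 := by linarith
    simpa [inner_sum] using this
  have hzero : ∀ β ∈ P \ Q, ⟪l, β⟫ = 0 := by
    intro β hβ
    have hnn : ∀ β ∈ P \ Q, 0 ≤ ⟪l, β⟫ := fun β hβ =>
      hl β (Finset.mem_sdiff.mp hβ).1
    exact (Finset.sum_eq_zero_iff_of_nonneg hnn).mp hsum0 β hβ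
  constructor
  · intro γ hγ
    rcases Finset.mem_inter.mp hγ with ⟨h1, h2⟩
    obtain ⟨a, ha, rfl⟩ := Finset.mem_image.mp h1
    have hna : a ∉ Q := fun h => hQneg a h h2
    have := hzero a (Finset.mem_sdiff.mpr ⟨ha, hna⟩)
    rw [inner_neg_right, this, neg_zero]
  · intro α hα
    by_cases hαP : α ∈ P
    · exact hl α hαP
    · have hnα : -α ∈ P := by
        rcases hP.mem_or_neg_mem α (hQΔ hα) with h | h
        · exact absurd h hαP
        · exact h
      have hnαQ : -α ∉ Q := hQneg α hα
      have := hzero (-α) (Finset.mem_sdiff.mpr ⟨hnα, hnαQ⟩)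
      rw [inner_neg_right] at this
      linarith
end
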